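/- With the setup of the previous combinatorics (coprime 1 < q < n, n/q = [α_1,…,αN], dual n/(n−q) = [a_2,…,a_{e−1}], c- and d-series as defined, b-series as defined, ν the number of leading 2's in the expansion of n/q), define Δ_k = 1 + Σ_{t=ν+1}^{k−1} c_{l_t} and Γ_k = Σ_{t=ν+1}^{k−1} d_{l_t} for ν+1 ≤ k ≤ N+1, where l_j = 2 + Σ_{p=1}^j(α_p−2). Then for all 2 ≤ t ≤ e−2 one has c_{t+2} = c_{t+1} + Δ_{b_t} and d_{t+2} = d_{t+1} + Γ_{b_t}. -/

import Mathlib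

/-- The Jung–Hirzebruch negative continued fraction. -/
def ncf : List ℤ → ℚ
  | [] => 0
  | a :: l => (a : ℚ) - (ncf l)⁻¹

def incFirst : List ℤ → List ℤ
  | [] => [2]
  | x :: l => (x + 1) :: l

def dual : List ℤ → List ℤ
  | [] => []
  | x :: l => List.replicate (x - 2).toNat 2 ++ incFirst (dual l)

lemma ncf_gt_one : ∀ L : List ℤ, (∀ y ∈ L, 2 ≤ y) → L ≠ [] → 1 < ncf L := by
  intro L
  induction L with
  | nil => intro _ h; exact absurd rfl h
  | cons x l ih =>
    intro hmem _
    have hx : (2:ℚ) ≤ (x:ℚ) := by exact_mod_cast hmem x (List.mem_cons_self)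
    show 1 < (x:ℚ) - (ncf l)⁻¹
    rcases eq_or_ne l [] with rfl | hl
    · simp [ncf]; linarith
    · have h1 : 1 < ncf l := ih (fun y hy => hmem y (List.mem_cons_of_mem x hy)) hl
      have : (ncf l)⁻¹ < 1 := by
        rw [inv_lt_one_iff₀]; right; exact h1
      have : 0 < (ncf l)⁻¹ := by positivity
      linarith [show (ncf l)⁻¹ < 1 from by rw [inv_lt_one_iff₀]; right; exact h1]

lemma ncf_inv_mem : ∀ L : List ℤ, (∀ y ∈ L, 2 ≤ y) → 0 ≤ (ncf L)⁻¹ ∧ (ncf L)⁻¹ < 1 := by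
  intro L h
  rcases eq_or_ne L [] with rfl | hL
  · simp [ncf]
  · have h1 := ncf_gt_one L h hL
    constructor
    · positivity
    · rw [inv_lt_one_iff₀]; right; exact h1

lemma ncf_inj : ∀ L1 L2 : List ℤ, (∀ y ∈ L1, 2 ≤ y) → (∀ y ∈ L2, 2 ≤ y) →
    ncf L1 = ncf L2 → L1 = L2 := by
  intro L1
  induction L1 with
  | nil =>
    intro L2 _ h2 he
    rcases eq_or_ne L2 [] with rfl | hL2
    · rfl
    · have := ncf_gt_one L2 h2 hL2
      have h1' : (1:ℚ) < ncf L2 := this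
      rw [← he] at h1'
      norm_num [ncf] at h1'
  | cons x l ih =>
    intro L2 h1 h2 he
    rcases eq_or_ne L2 [] with rfl | hL2
    · have h1' : (1:ℚ) < (x:ℚ) - (ncf l)⁻¹ := ncf_gt_one (x :: l) h1 (by simp)
      have he' : (x:ℚ) - (ncf l)⁻¹ = 0 := he
      rw [he'] at h1'; norm_num at h1'
    · obtain ⟨y, m, rfl⟩ := List.exists_cons_of_ne_nil hL2
      have hxl : ∀ z ∈ l, 2 ≤ z := fun z hz => h1 z (List.mem_cons_of_mem x hz)
      have hym : ∀ z ∈ m, 2 ≤ z := fun z hz => h2 z (List.mem_cons_of_mem y hz)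
      have hel : (x : ℚ) - (ncf l)⁻¹ = (y : ℚ) - (ncf m)⁻¹ := he
      obtain ⟨hl0, hl1⟩ := ncf_inv_mem l hxl
      obtain ⟨hm0, hm1⟩ := ncf_inv_mem m hym
      have hxy : x = y := by
        have : ((x : ℚ) - y) = (ncf l)⁻¹ - (ncf m)⁻¹ := by linarith
        have hlt : |((x:ℚ) - y)| < 1 := by rw [this, abs_lt]; constructor <;> linarith
        have h2' : |((x - y : ℤ) : ℚ)| < 1 := by push_cast; exact hlt
        have : |x - y| < 1 := by exact_mod_cast h2'
        rw [abs_lt] at this; omega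
      subst hxy
      have : (ncf l)⁻¹ = (ncf m)⁻¹ := by linarith
      have hlm : ncf l = ncf m := inv_injective this
      rw [ih m hxl hym hlm]

lemma incFirst_ne_nil (M : List ℤ) : incFirst M ≠ [] := by
  cases M <;> simp [incFirst]

lemma dual_ne_nil (L : List ℤ) (h : L ≠ []) : dual L ≠ [] := by
  obtain ⟨x, l, rfl⟩ := List.exists_cons_of_ne_nil h
  show List.replicate (x - 2).toNat 2 ++ incFirst (dual l) ≠ []
  simp [incFirst_ne_nil]

lemma ncf_incFirst (M : List ℤ) (h : M ≠ []) : ncf (incFirst M) = ncf M + 1 := by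
  obtain ⟨x, l, rfl⟩ := List.exists_cons_of_ne_nil h
  show ((x + 1 : ℤ) : ℚ) - (ncf l)⁻¹ = ((x:ℚ) - (ncf l)⁻¹) + 1
  push_cast; ring

lemma ncf_replicate_append (M : List ℤ) (s : ℚ) (hs : 1 < s)
    (hM : ncf M = s / (s - 1)) :
    ∀ k : ℕ, ncf (List.replicate k 2 ++ M) = (s + k) / (s + k - 1) := by
  intro k
  induction k with
  | zero => simpa using hM
  | succ k ih =>
    have hpos : (0:ℚ) < s + k - 1 := by
      have : (0:ℚ) ≤ (k:ℚ) := Nat.cast_nonneg k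
      linarith
    have : ncf (List.replicate (k+1) 2 ++ M) = 2 - (ncf (List.replicate k 2 ++ M))⁻¹ := by
      rw [List.replicate_succ, List.cons_append]
      show ((2:ℤ):ℚ) - _ = _
      norm_num
    rw [this, ih]
    rw [eq_div_iff (by push_cast; linarith)]
    rw [inv_div]
    field_simp
    push_cast
    ring

lemma dual_mem : ∀ L : List ℤ, (∀ y ∈ L, 2 ≤ y) → ∀ y ∈ dual L, 2 ≤ y := by
  intro L
  induction L with
  | nil => intro _ y hy; simp [dual] at hy
  | cons x l ih =>
    intro h y hy
    have : y ∈ List.replicate (x - 2).toNat 2 ++ incFirst (dual l) := hy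
    rw [List.mem_append] at this
    rcases this with h' | h'
    · rw [List.eq_of_mem_replicate h']
    · have ihm := ih (fun z hz => h z (List.mem_cons_of_mem x hz))
      rcases hd : dual l with _ | ⟨d0, dt⟩
      · rw [hd] at h'; simp [incFirst] at h'; omega
      · rw [hd] at h'; simp [incFirst] at h'
        rcases h' with rfl | h'
        · have : 2 ≤ d0 := ihm d0 (by rw [hd]; exact List.mem_cons_self)
          omega
        · exact ihm y (by rw [hd]; exact List.mem_cons_of_mem d0 h')

lemma ncf_dual : ∀ L : List ℤ, (∀ y ∈ L, 2 ≤ y) → L ≠ [] →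
    ncf (dual L) = ncf L / (ncf L - 1) := by
  intro L
  induction L with
  | nil => intro _ h; exact absurd rfl h
  | cons x l ih =>
    intro h _
    have hx : 2 ≤ x := h x (List.mem_cons_self)
    have hk : ((x - 2).toNat : ℚ) = (x : ℚ) - 2 := by
      have : ((x-2).toNat : ℤ) = x - 2 := Int.toNat_of_nonneg (by omega)
      exact_mod_cast congrArg (Int.cast : ℤ → ℚ) this
    show ncf (List.replicate (x - 2).toNat 2 ++ incFirst (dual l)) = _
    rcases eq_or_ne l [] with rfl | hl
    · have h2 : ncf (incFirst (dual ([] : List ℤ))) = 2 := by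
        show ncf [(2:ℤ)] = 2
        show ((2:ℤ):ℚ) - (ncf [])⁻¹ = 2
        show ((2:ℤ):ℚ) - (0:ℚ)⁻¹ = 2
        norm_num
      rw [ncf_replicate_append _ 2 (by norm_num) (by rw [h2]; norm_num)]
      have hvx : ncf [x] = (x:ℚ) := by
        show (x:ℚ) - (ncf [])⁻¹ = (x:ℚ)
        show (x:ℚ) - (0:ℚ)⁻¹ = (x:ℚ)
        norm_num
      rw [show (2:ℚ) + (((x - 2).toNat : ℕ) : ℚ) = ncf [x] by rw [hvx, hk]; ring]
    · have hml : ∀ z ∈ l, 2 ≤ z := fun z hz => h z (List.mem_cons_of_mem x hz)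
      have hxl : 1 < ncf l := ncf_gt_one l hml hl
      have hdl : ncf (dual l) = ncf l / (ncf l - 1) := ih hml hl
      have hinc : ncf (incFirst (dual l)) = ncf l / (ncf l - 1) + 1 :=
        by rw [ncf_incFirst _ (dual_ne_nil l hl), hdl]
      set xl := ncf l with hxl'
      have hxl0 : xl - 1 ≠ 0 := by intro h0; rw [sub_eq_zero] at h0; rw [← h0] at hxl; norm_num at hxl
      have hxlne : xl ≠ 0 := by intro h0; rw [h0] at hxl; norm_num at hxl
      set s : ℚ := 2 - xl⁻¹ with hs
      have hs1 : 1 < s := by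
        have : xl⁻¹ < 1 := by rw [inv_lt_one_iff₀]; right; exact hxl
        simp only [hs]; linarith
      have hs0 : s - 1 ≠ 0 := by intro h0; rw [sub_eq_zero] at h0; rw [← h0] at hs1; norm_num at hs1
      have hsval : ncf (incFirst (dual l)) = s / (s - 1) := by
        rw [hinc, hs]
        have hxlpos : (0:ℚ) < xl := by linarith
        have h1m : 1 - xl⁻¹ ≠ 0 := by
          have : xl⁻¹ < 1 := by rw [inv_lt_one_iff₀]; right; exact hxl
          intro h0; have : xl⁻¹ = 1 := by linarith
          linarith
        rw [show (2:ℚ) - xl⁻¹ - 1 = 1 - xl⁻¹ by ring]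
        field_simp
        ring
      rw [ncf_replicate_append _ s hs1 hsval]
      have hval : ncf (x :: l) = (x : ℚ) - xl⁻¹ := rfl
      rw [show s + (((x - 2).toNat : ℕ) : ℚ) = ncf (x :: l) by rw [hval, hs, hk]; ring]

lemma dual_length : ∀ L : List ℤ, L ≠ [] →
    (dual L).length = (L.map (fun y => (y - 2).toNat)).sum + 1 := by
  intro L
  induction L with
  | nil => intro h; exact absurd rfl h
  | cons x l ih =>
    intro _
    show (List.replicate (x - 2).toNat 2 ++ incFirst (dual l)).length = _
    rw [List.length_append, List.length_replicate]
    rcases eq_or_ne l [] with rfl | hl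
    · simp [dual, incFirst]
    · have : (incFirst (dual l)).length = (dual l).length := by
        obtain ⟨d0, dt, hd⟩ := List.exists_cons_of_ne_nil (dual_ne_nil l hl)
        rw [hd]; rfl
      rw [this, ih hl]
      simp [List.sum_cons]
      omega

def sig (L : List ℤ) (p : ℕ) : ℤ := ∑ q ∈ Finset.range p, (L.getD q 0 - 2)

lemma sig_zero (L : List ℤ) : sig L 0 = 0 := by simp [sig]

lemma sig_cons (x : ℤ) (l : List ℤ) (p : ℕ) :
    sig (x :: l) (p + 1) = (x - 2) + sig l p := by
  unfold sig
  rw [Finset.sum_range_succ']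
  simp [add_comm]

lemma sig_nonneg (L : List ℤ) (h : ∀ y ∈ L, 2 ≤ y) (p : ℕ) (hp : p ≤ L.length) :
    0 ≤ sig L p := by
  apply Finset.sum_nonneg
  intro q hq
  rw [Finset.mem_range] at hq
  have hqL : q < L.length := lt_of_lt_of_le hq hp
  rw [List.getD_eq_getElem L 0 hqL]
  have := h _ (List.getElem_mem hqL)
  omega

lemma incFirst_length (M : List ℤ) (h : M ≠ []) : (incFirst M).length = M.length := by
  obtain ⟨m0, mt, rfl⟩ := List.exists_cons_of_ne_nil h
  rfl

lemma dual_entry : ∀ L : List ℤ, (∀ y ∈ L, 2 ≤ y) →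
    ∀ i : ℕ, ∀ hi : i < (dual L).length,
      (dual L)[i] =
        2 + ((Finset.Ico 1 L.length).filter (fun p => sig L p = (i : ℤ))).card := by
  intro L
  induction L with
  | nil => intro _ i hi; simp [dual] at hi
  | cons x l ih =>
    intro h i hi
    have hx : 2 ≤ x := h x (List.mem_cons_self)
    set k := (x - 2).toNat with hkdef
    have hk : (k : ℤ) = x - 2 := Int.toNat_of_nonneg (by omega)
    have hml : ∀ z ∈ l, 2 ≤ z := fun z hz => h z (List.mem_cons_of_mem x hz)
    have hdL : dual (x :: l) = List.replicate k 2 ++ incFirst (dual l) := rfl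
    have hi' : i < (List.replicate k 2 ++ incFirst (dual l)).length := by rw [← hdL]; exact hi
    have hgeq : (dual (x :: l))[i]'hi = (List.replicate k 2 ++ incFirst (dual l))[i]'hi' := by
      simp only [hdL]
    rcases lt_or_ge i k with hik | hik
    · -- entry is 2, count is 0
      have hget : (dual (x :: l))[i]'hi = 2 := by
        rw [hgeq, List.getElem_append_left (by simpa using hik), List.getElem_replicate]
      rw [hget]
      have : ((Finset.Ico 1 (x :: l).length).filter (fun p => sig (x :: l) p = (i : ℤ))).card = 0 := by
        rw [Finset.card_eq_zero, Finset.filter_eq_empty_iff]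
        intro p hp
        rw [Finset.mem_Ico] at hp
        obtain ⟨p', rfl⟩ := Nat.exists_eq_add_of_le hp.1
        rw [show 1 + p' = p' + 1 by omega, sig_cons]
        have h0 : 0 ≤ sig l p' := sig_nonneg l hml p' (by
          have := hp.2; simp only [List.length_cons] at this; omega)
        intro hcon
        omega
      rw [this]; norm_num
    · -- i ≥ k
      have hik2 : i - k < (incFirst (dual l)).length := by
        have := hi'
        rw [List.length_append, List.length_replicate] at this
        omega
      have hget : (dual (x :: l))[i]'hi = (incFirst (dual l))[i - k]'hik2 := by
        rw [hgeq, List.getElem_append_right (by simpa using hik)]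
        simp
      rcases eq_or_ne l [] with rfl | hl
      · -- l = [], incFirst (dual []) = [2]
        have h2 : incFirst (dual ([] : List ℤ)) = [(2:ℤ)] := rfl
        have hik2' : i - k < ([(2:ℤ)]).length := by rw [← h2]; exact hik2
        have : (incFirst (dual ([] : List ℤ)))[i - k]'hik2 = ([(2:ℤ)])[i - k]'hik2' := by
          simp only [h2]
        have h0 : i - k = 0 := by simp at hik2'; omega
        have hc : ((Finset.Ico 1 ([x] : List ℤ).length).filter
            (fun p => sig [x] p = (i : ℤ))).card = 0 := by
          simp
        rw [hget, this, hc]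
        simp [h0]
      · -- l ≠ []
        have hdln : dual l ≠ [] := dual_ne_nil l hl
        have hlL : 1 ≤ l.length := List.length_pos_iff.mpr hl
        have hcast : ((i - k : ℕ) : ℤ) = (i : ℤ) - (k : ℤ) := by push_cast [hik]; omega
        -- count identity
        have hcount : ((Finset.Ico 1 (x :: l).length).filter (fun p => sig (x :: l) p = (i : ℤ))).card
            = (if i = k then 1 else 0)
              + ((Finset.Ico 1 l.length).filter (fun p => sig l p = ((i - k : ℕ) : ℤ))).card := by
          rw [Finset.card_filter, Finset.card_filter]
          have hlen' : (x :: l).length = l.length + 1 := rfl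
          rw [hlen']
          rw [Finset.sum_eq_sum_Ico_succ_bot (by omega : 1 < l.length + 1)]
          congr 1
          · have h1 : sig (x :: l) 1 = (x - 2) := by
              rw [show (1:ℕ) = 0 + 1 from rfl, sig_cons, sig_zero]; ring
            rw [h1]
            have hiff : (x - 2 = (i:ℤ)) ↔ (i = k) := by omega
            simp only [hiff]
          · rw [Finset.sum_Ico_eq_sum_range, Finset.sum_Ico_eq_sum_range]
            apply Finset.sum_congr rfl
            intro j _
            have hs2 : sig (x :: l) (2 + j) = (x - 2) + sig l (1 + j) := by
              rw [show 2 + j = (1 + j) + 1 by omega, sig_cons]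
            rw [hs2]
            have hiff : (x - 2 + sig l (1 + j) = (i:ℤ)) ↔ (sig l (1 + j) = ((i - k : ℕ) : ℤ)) := by
              omega
            simp only [hiff]
        rw [hget, hcount]
        -- entry via IH
        obtain ⟨d0, dt, hd⟩ := List.exists_cons_of_ne_nil hdln
        have hinc : incFirst (dual l) = (d0 + 1) :: dt := by rw [hd]; rfl
        have hik2' : i - k < ((d0 + 1) :: dt).length := by rw [← hinc]; exact hik2
        have hgeq2 : (incFirst (dual l))[i - k]'hik2 = ((d0 + 1) :: dt)[i - k]'hik2' := by
          simp only [hinc]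
        rcases Nat.eq_zero_or_pos (i - k) with h0 | hpos
        · -- i = k
          have hik0 : i = k := by omega
          have h0' : (0:ℕ) < (dual l).length := by rw [hd]; simp
          have ihd := ih hml 0 h0'
          have hd0 : (dual l)[0]'h0' = d0 := by simp only [hd]; rfl
          rw [hgeq2]
          have : ((d0 + 1) :: dt)[i - k]'hik2' = d0 + 1 := by
            simp only [h0] at hik2' ⊢
            exact List.getElem_cons_zero _ _ _
          rw [this, ← hd0, ihd]
          rw [if_pos hik0, show (i - k : ℕ) = 0 from h0]
          push_cast
          ring
        · -- i > k
          obtain ⟨j, hj⟩ : ∃ j, i - k = j + 1 := ⟨i - k - 1, by omega⟩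
          have hjlt : j + 1 < (dual l).length := by
            have := hik2; rw [incFirst_length _ hdln] at this; omega
          have hjlt' : j + 1 < ((d0 + 1) :: dt).length := by
            rw [← hinc, incFirst_length _ hdln]; exact hjlt
          have hgg : ((d0 + 1) :: dt)[i - k]'hik2' = ((d0 + 1) :: dt)[j + 1]'hjlt' := by
            simp only [hj]
          have hjdt : j < dt.length := by
            have := hjlt'; simp at this; omega
          have hdt : (dual l)[j + 1]'hjlt = dt[j]'hjdt := by
            simp only [hd, List.getElem_cons_succ]
          have ihd := ih hml (j + 1) hjlt
          rw [hgeq2, hgg, List.getElem_cons_succ, ← hdt, ihd]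
          rw [if_neg (by omega : ¬ i = k), show (i - k : ℕ) = j + 1 from hj]
          ring

theorem stmt12 (n q : ℤ) (hq : 1 < q) (hn : q < n) (hcop : IsCoprime n q)
    (N : ℕ) (hN : 1 ≤ N) (α : ℕ → ℤ) (hαb : ∀ t, 1 ≤ t → t ≤ N → 2 ≤ α t)
    (hncf : ncf (List.ofFn (fun j : Fin N => α (j + 1))) = (n : ℚ) / (q : ℚ))
    (e : ℕ) (he : 3 ≤ e) (a : ℕ → ℤ) (hab : ∀ j, 2 ≤ j → j ≤ e - 1 → 2 ≤ a j)
    (hancf : ncf (List.ofFn (fun j : Fin (e - 2) => a (j + 2))) =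
      (n : ℚ) / ((n : ℚ) - (q : ℚ)))
    (c d : ℕ → ℤ)
    (hc2 : c 2 = 1) (hc3 : c 3 = 0) (hc4 : c 4 = 1)
    (hcrec : ∀ j, 5 ≤ j → j ≤ e → c j = a (j - 1) * c (j - 1) - c (j - 2))
    (hd2 : d 2 = 0) (hd3 : d 3 = 1) (hd4 : d 4 = a 3 - 1)
    (hdrec : ∀ j, 5 ≤ j → j ≤ e → d j = a (j - 1) * d (j - 1) - d (j - 2))
    (l : ℕ → ℕ) (hl : ∀ j, (l j : ℤ) = 2 + ∑ p ∈ Finset.Icc 1 j, (α p - 2))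
    (b : ℕ → ℕ) (hb0 : b 0 = 1) (hblN : b (l N - 1) = N)
    (hb : ∀ t, 1 ≤ t → t ≤ l N - 2 →
      1 ≤ b t ∧ b t ≤ N ∧ (t : ℤ) ≤ ∑ p ∈ Finset.Icc 1 (b t), (α p - 2) ∧
        ∀ m, 1 ≤ m → m ≤ N → (t : ℤ) ≤ ∑ p ∈ Finset.Icc 1 m, (α p - 2) → b t ≤ m)
    (ν : ℕ) (hνN : ν ≤ N) (hν2 : ∀ t, 1 ≤ t → t ≤ ν → α t = 2)
    (hν3 : ν = N ∨ 3 ≤ α (ν + 1)) :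
    ∀ t, 2 ≤ t → t ≤ e - 2 →
      c (t + 2) = c (t + 1) + (1 + ∑ s ∈ Finset.Icc (ν + 1) (b t - 1), c (l s)) ∧
      d (t + 2) = d (t + 1) + ∑ s ∈ Finset.Icc (ν + 1) (b t - 1), d (l s) := by
  set A : List ℤ := List.ofFn (fun j : Fin N => α (j + 1)) with hA
  have hAmem : ∀ y ∈ A, 2 ≤ y := by
    intro y hy
    rw [hA, List.mem_ofFn] at hy
    obtain ⟨j, rfl⟩ := hy
    exact hαb (j + 1) (by omega) (by omega)
  have hAlen : A.length = N := by rw [hA]; simp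
  have hAne : A ≠ [] := by
    intro h0; rw [h0] at hAlen; simp at hAlen; omega
  -- rational facts
  have hq0 : (q : ℚ) ≠ 0 := Int.cast_ne_zero.mpr (by omega)
  have hnq0 : (n : ℚ) - q ≠ 0 := by
    intro h0
    have : (n : ℚ) = q := by linarith
    have : n = q := by exact_mod_cast this
    omega
  have hdval : ncf (dual A) = (n : ℚ) / ((n : ℚ) - q) := by
    rw [ncf_dual A hAmem hAne, hncf]
    have h1 : (n : ℚ) / q - 1 = ((n : ℚ) - q) / q := by field_simp
    have h2 : (n : ℚ) / q - 1 ≠ 0 := by rw [h1]; exact div_ne_zero hnq0 hq0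
    rw [h1]
    have h3 : (n:ℚ) / q / (((n:ℚ) - q) / q) = (n:ℚ) / ((n:ℚ) - q) := by
      rw [div_div_div_eq]
      rw [div_eq_div_iff (mul_ne_zero hq0 hnq0) hnq0]
      ring
    exact h3
  -- list equality
  have hamem : ∀ y ∈ List.ofFn (fun j : Fin (e - 2) => a (j + 2)), 2 ≤ y := by
    intro y hy
    rw [List.mem_ofFn] at hy
    obtain ⟨j, rfl⟩ := hy
    exact hab (j + 2) (by omega) (by have := j.2; omega)
  have hEq : List.ofFn (fun j : Fin (e - 2) => a (j + 2)) = dual A :=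
    ncf_inj _ _ hamem (dual_mem A hAmem) (by rw [hancf, hdval])
  have hdlen : (dual A).length = e - 2 := by rw [← hEq]; simp
  -- sig of A
  have hsigA : ∀ p, p ≤ N → sig A p = (l p : ℤ) - 2 := by
    intro p
    induction p with
    | zero =>
      intro _
      rw [sig_zero, hl 0]
      simp
    | succ p ih =>
      intro hp
      have h1 : sig A (p + 1) = sig A p + (A.getD p 0 - 2) := by
        unfold sig; rw [Finset.sum_range_succ]
      have hpN : p < A.length := by rw [hAlen]; omega
      have h2 : A.getD p 0 = α (p + 1) := by
        rw [List.getD_eq_getElem A 0 hpN]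
        simp only [hA]
        rw [List.getElem_ofFn]
      have h3 : (l (p + 1) : ℤ) = (l p : ℤ) + (α (p + 1) - 2) := by
        rw [hl, hl, Finset.sum_Icc_succ_top (by omega : 1 ≤ p + 1)]
        ring
      rw [h1, h2, ih (by omega), h3]
      ring
  -- length computation : e = l N + 1
  have hsum_toNat : ∀ L : List ℤ, (∀ y ∈ L, 2 ≤ y) →
      (((L.map fun y => (y - 2).toNat).sum : ℕ) : ℤ) = sig L L.length := by
    intro L
    induction L with
    | nil => intro _; simp [sig_zero]
    | cons x lx ih =>
      intro hm
      have hx : 2 ≤ x := hm x (List.mem_cons_self)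
      have hlen : (x :: lx).length = lx.length + 1 := rfl
      rw [List.map_cons, List.sum_cons, hlen, sig_cons, Nat.cast_add]
      rw [ih (fun z hz => hm z (List.mem_cons_of_mem x hz))]
      have h2 : ((x - 2).toNat : ℤ) = x - 2 := Int.toNat_of_nonneg (by omega)
      rw [h2]
  have hlN2 : 2 ≤ (l N : ℤ) := by
    rw [hl]
    have : 0 ≤ ∑ p ∈ Finset.Icc 1 N, (α p - 2) := by
      apply Finset.sum_nonneg
      intro p hp
      rw [Finset.mem_Icc] at hp
      have := hαb p hp.1 hp.2
      omega
    omega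
  have heN : e = l N + 1 := by
    have h1 := dual_length A hAne
    rw [hdlen] at h1
    have h2 := hsum_toNat A hAmem
    rw [hAlen] at h2
    have h3 := hsigA N (le_refl N)
    rw [h3] at h2
    have h4 : ((e - 2 : ℕ) : ℤ) = (((A.map fun y => (y - 2).toNat).sum : ℕ) : ℤ) + 1 := by
      exact_mod_cast h1
    rw [h2] at h4
    omega
  -- the entry formula
  have hstar : ∀ i : ℕ, i < e - 2 → a (i + 2) =
      2 + (((Finset.Icc 1 (N - 1)).filter (fun p => (l p : ℤ) = (i : ℤ) + 2)).card : ℤ) := by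
    intro i hi
    have hi1 : i < (List.ofFn (fun j : Fin (e - 2) => a (j + 2))).length := by simp [hi]
    have hi2 : i < (dual A).length := by rw [hdlen]; exact hi
    have hval : (List.ofFn (fun j : Fin (e - 2) => a (j + 2)))[i]'hi1 = a (i + 2) := by
      rw [List.getElem_ofFn]
    have hval2 : (List.ofFn (fun j : Fin (e - 2) => a (j + 2)))[i]'hi1 = (dual A)[i]'hi2 := by
      simp only [hEq]
    have hent := dual_entry A hAmem i hi2
    have hset : (Finset.Ico 1 A.length).filter (fun p => sig A p = (i : ℤ)) =
        (Finset.Icc 1 (N - 1)).filter (fun p => (l p : ℤ) = (i : ℤ) + 2) := by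
      rw [hAlen, show Finset.Ico 1 N = Finset.Icc 1 (N - 1) by
        rw [← Finset.Ico_add_one_right_eq_Icc]; congr 1; omega]
      apply Finset.filter_congr
      intro p hp
      rw [Finset.mem_Icc] at hp
      rw [hsigA p (by omega)]
      omega
    rw [← hval, hval2, hent, hset]
  -- properties of l
  have hlmono : ∀ m m' : ℕ, m ≤ m' → m' ≤ N → (l m : ℤ) ≤ (l m' : ℤ) := by
    intro m m' hmm hm'
    rw [hl, hl]
    have hsplit : ∑ p ∈ Finset.Icc 1 m', (α p - 2) =
        ∑ p ∈ Finset.Icc 1 m, (α p - 2) + ∑ p ∈ Finset.Ico (m + 1) (m' + 1), (α p - 2) := by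
      rw [← Finset.Ico_add_one_right_eq_Icc, ← Finset.Ico_add_one_right_eq_Icc]
      rw [← Finset.sum_Ico_consecutive _ (by omega : 1 ≤ m + 1) (by omega : m + 1 ≤ m' + 1)]
    have hpos : 0 ≤ ∑ p ∈ Finset.Ico (m + 1) (m' + 1), (α p - 2) := by
      apply Finset.sum_nonneg
      intro p hp
      rw [Finset.mem_Ico] at hp
      have := hαb p (by omega) (by omega)
      omega
    omega
  have hlnu : ∀ p, p ≤ ν → (l p : ℤ) = 2 := by
    intro p hp
    rw [hl]
    have : ∑ s ∈ Finset.Icc 1 p, (α s - 2) = 0 := by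
      apply Finset.sum_eq_zero
      intro s hs
      rw [Finset.mem_Icc] at hs
      have := hν2 s hs.1 (by omega)
      omega
    omega
  have hlnu3 : ∀ p, ν + 1 ≤ p → p ≤ N → 3 ≤ (l p : ℤ) := by
    intro p hp1 hp2
    have hνlt : ν < N := by omega
    have hα3 : 3 ≤ α (ν + 1) := by
      rcases hν3 with h0 | h0
      · omega
      · exact h0
    have h1 : (l (ν + 1) : ℤ) = 2 + (α (ν + 1) - 2) := by
      rw [hl, Finset.sum_Icc_succ_top (by omega : 1 ≤ ν + 1)]
      have : ∑ s ∈ Finset.Icc 1 ν, (α s - 2) = 0 := by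
        apply Finset.sum_eq_zero
        intro s hs
        rw [Finset.mem_Icc] at hs
        have := hν2 s hs.1 hs.2
        omega
      omega
    have := hlmono (ν + 1) p hp1 hp2
    omega
  -- b facts
  have hbLow : ∀ t, 2 ≤ t → t ≤ e - 2 → ν + 1 ≤ b t ∧ b t ≤ N := by
    intro t ht2 hte
    rcases le_or_gt t (e - 3) with hcase | hcase
    · have hbt := hb t (by omega) (by omega)
      obtain ⟨h1, h2, h3, _⟩ := hbt
      constructor
      · by_contra hcon
        have hbν : b t ≤ ν := by omega
        have := hlnu (b t) hbν
        rw [hl] at this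
        omega
      · exact h2
    · have ht' : t = l N - 1 := by omega
      rw [ht', hblN]
      have hν' : ν < N := by
        by_contra hcon
        have : ν = N := by omega
        have := hlnu N (by omega)
        omega
      omega
  have hbIff : ∀ t, 2 ≤ t → t ≤ e - 2 → ∀ p, 1 ≤ p → p ≤ N - 1 →
      (p < b t ↔ (l p : ℤ) ≤ (t : ℤ) + 1) := by
    intro t ht2 hte p hp1 hp2
    rcases le_or_gt t (e - 3) with hcase | hcase
    · obtain ⟨h1, h2, h3, h4⟩ := hb t (by omega) (by omega)
      have hlbt : (t : ℤ) + 2 ≤ (l (b t) : ℤ) := by rw [hl]; omega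
      constructor
      · intro hlt
        by_contra hcon
        have : (t : ℤ) + 2 ≤ (l p : ℤ) := by omega
        have := h4 p hp1 (by omega) (by rw [hl] at this; omega)
        omega
      · intro hle
        by_contra hcon
        have : (l (b t) : ℤ) ≤ (l p : ℤ) := hlmono (b t) p (by omega) (by omega)
        omega
    · have ht' : t = l N - 1 := by omega
      have hbt : b t = N := by rw [ht']; exact hblN
      have hlN3 : 3 ≤ (l N : ℤ) := by
        have : ((l N : ℕ) : ℤ) ≥ 3 ∨ (l N : ℤ) ≤ 2 := by omega
        omega
      constructor
      · intro _
        have h1 : (l p : ℤ) ≤ (l N : ℤ) := hlmono p N (by omega) (le_refl N)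
        have : (t : ℤ) = (l N : ℤ) - 1 := by omega
        omega
      · intro _
        rw [hbt]
        omega
  -- monotonicity of b
  have hbMono : ∀ t, 2 ≤ t → t + 1 ≤ e - 2 → b t ≤ b (t + 1) := by
    intro t ht2 hte
    by_contra hcon
    have hL1 := hbLow t ht2 (by omega)
    have hL2 := hbLow (t + 1) (by omega) hte
    set p := b (t + 1) with hp
    have hp1 : 1 ≤ p := by omega
    have hp2 : p ≤ N - 1 := by omega
    have h1 := (hbIff t ht2 (by omega) p hp1 hp2).mp (by omega)
    have h2 : ¬ ((l p : ℤ) ≤ ((t + 1 : ℕ) : ℤ) + 1) := by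
      intro hcon2
      have := (hbIff (t + 1) (by omega) hte p hp1 hp2).mpr hcon2
      omega
    push_cast at h2
    omega
  -- set equality, step version
  have hSE : ∀ t, 2 ≤ t → t ≤ e - 3 →
      (Finset.Icc 1 (N - 1)).filter (fun p => (l p : ℤ) = (t : ℤ) + 2) =
        Finset.Ico (b t) (b (t + 1)) := by
    intro t ht2 ht3
    have hL1 := hbLow t ht2 (by omega)
    have hL2 := hbLow (t + 1) (by omega) (by omega)
    ext p
    simp only [Finset.mem_filter, Finset.mem_Icc, Finset.mem_Ico]
    constructor
    · rintro ⟨⟨hp1, hp2⟩, hp3⟩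
      have hi1 := hbIff t ht2 (by omega) p hp1 hp2
      have hi2 := hbIff (t + 1) (by omega) (by omega) p hp1 hp2
      constructor
      · by_contra hcon
        have := hi1.mp (by omega)
        omega
      · apply hi2.mpr
        push_cast
        omega
    · rintro ⟨hp1, hp2⟩
      have hp1' : 1 ≤ p := by omega
      have hp2' : p ≤ N - 1 := by omega
      have hi1 := hbIff t ht2 (by omega) p hp1' hp2'
      have hi2 := hbIff (t + 1) (by omega) (by omega) p hp1' hp2'
      have hge : ¬ ((l p : ℤ) ≤ (t : ℤ) + 1) := by
        intro hcon
        have := hi1.mpr hcon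
        omega
      have hle := hi2.mp hp2
      push_cast at hle
      exact ⟨⟨hp1', hp2'⟩, by omega⟩
  -- set equality, base version
  have hSE0 : 2 ≤ e - 2 →
      (Finset.Icc 1 (N - 1)).filter (fun p => (l p : ℤ) = 3) = Finset.Ico (ν + 1) (b 2) := by
    intro he4
    have hL := hbLow 2 (by omega) he4
    ext p
    simp only [Finset.mem_filter, Finset.mem_Icc, Finset.mem_Ico]
    constructor
    · rintro ⟨⟨hp1, hp2⟩, hp3⟩
      constructor
      · by_contra hcon
        have := hlnu p (by omega)
        omega
      · exact (hbIff 2 (by omega) he4 p hp1 hp2).mpr (by push_cast; omega)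
    · rintro ⟨hp1, hp2⟩
      have hp1' : 1 ≤ p := by omega
      have hp2' : p ≤ N - 1 := by omega
      have h3 := hlnu3 p hp1 (by omega)
      have h4 := (hbIff 2 (by omega) he4 p hp1' hp2').mp hp2
      push_cast at h4
      exact ⟨⟨hp1', hp2'⟩, by omega⟩
  -- main induction
  intro t ht2
  induction t, ht2 using Nat.le_induction with
  | base =>
    intro hte
    have hL := hbLow 2 (by omega) hte
    have hIcc : Finset.Icc (ν + 1) (b 2 - 1) = Finset.Ico (ν + 1) (b 2) := by
      rw [← Finset.Ico_add_one_right_eq_Icc]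
      congr 1
      omega
    have hls : ∀ s ∈ Finset.Ico (ν + 1) (b 2), l s = 3 := by
      intro s hs
      rw [Finset.mem_Ico] at hs
      have hs1 : 1 ≤ s := by omega
      have hs2 : s ≤ N - 1 := by omega
      have h1 := hlnu3 s hs.1 (by omega)
      have h2 := (hbIff 2 (by omega) hte s hs1 hs2).mp hs.2
      have h3 : (l s : ℤ) = 3 := by push_cast at h2; omega
      exact_mod_cast h3
    constructor
    · show c 4 = c 3 + (1 + ∑ s ∈ Finset.Icc (ν + 1) (b 2 - 1), c (l s))
      have hcsum : ∑ s ∈ Finset.Icc (ν + 1) (b 2 - 1), c (l s) = 0 := by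
        rw [hIcc]
        apply Finset.sum_eq_zero
        intro s hs
        rw [hls s hs, hc3]
      rw [hcsum, hc4, hc3]
      norm_num
    · show d 4 = d 3 + ∑ s ∈ Finset.Icc (ν + 1) (b 2 - 1), d (l s)
      have h3 := hstar 1 (by omega)
      norm_num at h3
      rw [hSE0 hte] at h3
      have hdsum : ∑ s ∈ Finset.Icc (ν + 1) (b 2 - 1), d (l s) =
          ((Finset.Ico (ν + 1) (b 2)).card : ℤ) := by
        rw [hIcc]
        rw [Finset.sum_congr rfl (fun s hs => by rw [hls s hs, hd3])]
        simp
      rw [hdsum, hd4, hd3]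
      omega
  | succ t ht ih =>
    intro hte
    have ht3 : t ≤ e - 3 := by omega
    obtain ⟨ihc, ihd⟩ := ih (by omega)
    have hL1 := hbLow t (by omega) (by omega)
    have hL2 := hbLow (t + 1) (by omega) hte
    have hmono : b t ≤ b (t + 1) := hbMono t (by omega) hte
    have hstep := hstar t (by omega)
    rw [hSE t (by omega) ht3] at hstep
    have hls : ∀ s ∈ Finset.Ico (b t) (b (t + 1)), l s = t + 2 := by
      intro s hs
      rw [Finset.mem_Ico] at hs
      have hs1 : 1 ≤ s := by omega
      have hs2 : s ≤ N - 1 := by omega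
      have h1 := (hbIff (t + 1) (by omega) hte s hs1 hs2).mp hs.2
      have h2 : ¬ ((l s : ℤ) ≤ (t : ℤ) + 1) := by
        intro hcon
        have := (hbIff t (by omega) (by omega) s hs1 hs2).mpr hcon
        omega
      push_cast at h1
      have h3 : (l s : ℤ) = (t : ℤ) + 2 := by omega
      exact_mod_cast h3
    have hIcc1 : Finset.Icc (ν + 1) (b (t + 1) - 1) = Finset.Ico (ν + 1) (b (t + 1)) := by
      rw [← Finset.Ico_add_one_right_eq_Icc]; congr 1; omega
    have hIcc0 : Finset.Icc (ν + 1) (b t - 1) = Finset.Ico (ν + 1) (b t) := by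
      rw [← Finset.Ico_add_one_right_eq_Icc]; congr 1; omega
    set K := (Finset.Ico (b t) (b (t + 1))).card with hK
    have hsplitc : ∑ s ∈ Finset.Icc (ν + 1) (b (t + 1) - 1), c (l s)
        = ∑ s ∈ Finset.Icc (ν + 1) (b t - 1), c (l s) + (K : ℤ) * c (t + 2) := by
      rw [hIcc1, hIcc0]
      rw [← Finset.sum_Ico_consecutive _ (show ν + 1 ≤ b t by omega) hmono]
      congr 1
      rw [Finset.sum_congr rfl (fun s hs => by rw [hls s hs])]
      rw [Finset.sum_const, hK, nsmul_eq_mul]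
    have hsplitd : ∑ s ∈ Finset.Icc (ν + 1) (b (t + 1) - 1), d (l s)
        = ∑ s ∈ Finset.Icc (ν + 1) (b t - 1), d (l s) + (K : ℤ) * d (t + 2) := by
      rw [hIcc1, hIcc0]
      rw [← Finset.sum_Ico_consecutive _ (show ν + 1 ≤ b t by omega) hmono]
      congr 1
      rw [Finset.sum_congr rfl (fun s hs => by rw [hls s hs])]
      rw [Finset.sum_const, hK, nsmul_eq_mul]
    have e1 : t + 3 - 1 = t + 2 := by omega
    have e2 : t + 3 - 2 = t + 1 := by omega
    have hc'' := hcrec (t + 3) (by omega) (by omega)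
    rw [e1, e2] at hc''
    have hd'' := hdrec (t + 3) (by omega) (by omega)
    rw [e1, e2] at hd''
    constructor
    · show c (t + 3) = c (t + 2) + (1 + ∑ s ∈ Finset.Icc (ν + 1) (b (t + 1) - 1), c (l s))
      rw [hsplitc]
      linear_combination hc'' + c (t + 2) * hstep + ihc
    · show d (t + 3) = d (t + 2) + ∑ s ∈ Finset.Icc (ν + 1) (b (t + 1) - 1), d (l s)
      rw [hsplitd]
      linear_combination hd'' + d (t + 2) * hstep + ihd
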